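/- arXiv:1912.09762 — 6 statements merged into one kernel-verified Lean document; each statement's English description precedes it below -/
import Mathlib

section
/- Let Q̂ be the (N+1)×(N+1) complex matrix with entries Q̂_{j,m} = 1/(n_j - p_m) for j ∈ {1,…,N} and Q̂_{N+1,m} = 1 for all m ∈ {1,…,N+1}. If the numbers n_1,…,n_N are pairwise distinct, the numbers p_1,…,p_{N+1} are pairwise distinct, and n_j ≠ p_m for all j, m, then Q̂ is invertible. -/
open Polynomial Finset

/-- The augmented Cauchy-type matrix Q̂ with Q̂_{j,m} = 1/(n_j - p_m) for j ≤ N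
and last row all ones is invertible when the n's are pairwise distinct, the p's are
pairwise distinct, and n_j ≠ p_m for all j, m. -/
theorem stmt0 (N : ℕ) (hN : 0 < N) (n : Fin N → ℂ) (p : Fin (N + 1) → ℂ)
    (hn : Function.Injective n) (hp : Function.Injective p)
    (hnp : ∀ j m, n j ≠ p m) :
    IsUnit (Matrix.of (fun j m : Fin (N + 1) =>
      if h : (j : ℕ) < N then 1 / (n ⟨j, h⟩ - p m) else 1)) := by
  set M : Matrix (Fin (N+1)) (Fin (N+1)) ℂ := Matrix.of (fun j m : Fin (N + 1) =>
      if h : (j : ℕ) < N then 1 / (n ⟨j, h⟩ - p m) else 1) with hM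
  rw [Matrix.isUnit_iff_isUnit_det, isUnit_iff_ne_zero]
  intro hdet
  obtain ⟨v, hv, hMv⟩ := (Matrix.exists_mulVec_eq_zero_iff).mpr hdet
  -- the polynomial P(x) = ∑ m, v m * ∏_{l ≠ m} (x - p l)
  set P : ℂ[X] := ∑ m, C (v m) * ∏ l ∈ univ.erase m, (X - C (p l)) with hP
  have hcard : ∀ m : Fin (N+1), (univ.erase m).card = N := by
    intro m; simp [Finset.card_erase_of_mem]
  have hmonic : ∀ m : Fin (N+1), (∏ l ∈ univ.erase m, (X - C (p l))).Monic := by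
    intro m; exact monic_prod_of_monic _ _ (fun l _ => monic_X_sub_C _)
  have hdeg : ∀ m : Fin (N+1), (∏ l ∈ univ.erase m, (X - C (p l))).natDegree = N := by
    intro m
    rw [natDegree_prod _ _ (fun l _ => X_sub_C_ne_zero _)]
    simp [hcard m]
  -- last row: ∑ v m = 0
  have hsum : ∑ m, v m = 0 := by
    have := congrFun hMv (Fin.last N)
    simpa [Matrix.mulVec, dotProduct, hM] using this
  -- coeff N of P is ∑ v m = 0
  have hcoeff : P.coeff N = 0 := by
    rw [hP, finset_sum_coeff]
    rw [← hsum]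
    refine Finset.sum_congr rfl (fun m _ => ?_)
    rw [coeff_C_mul]
    have : (∏ l ∈ univ.erase m, (X - C (p l))).coeff N = 1 := by
      have := (hmonic m).leadingCoeff
      rwa [Polynomial.leadingCoeff, hdeg m] at this
    rw [this, mul_one]
  have hdegP : P.natDegree ≤ N := by
    apply Polynomial.natDegree_sum_le_of_forall_le
    intro m _
    exact (natDegree_C_mul_le _ _).trans_eq (hdeg m)
  -- P vanishes at each n j
  have heval : ∀ j : Fin N, P.eval (n j) = 0 := by
    intro j
    have hrow := congrFun hMv (Fin.castSucc j)
    have hrow' : ∑ m, (1 / (n j - p m)) * v m = 0 := by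
      have hj : ((Fin.castSucc j : Fin (N+1)) : ℕ) < N := j.isLt
      simpa [Matrix.mulVec, dotProduct, hM, hj] using hrow
    rw [hP, eval_finset_sum]
    calc ∑ m, (C (v m) * ∏ l ∈ univ.erase m, (X - C (p l))).eval (n j)
        = ∑ m, ((1 / (n j - p m)) * v m) * ∏ l, (n j - p l) := by
          refine Finset.sum_congr rfl (fun m _ => ?_)
          rw [eval_mul, eval_C, eval_prod]
          simp only [eval_sub, eval_X, eval_C]
          rw [← Finset.mul_prod_erase _ _ (Finset.mem_univ m)]
          have hne : n j - p m ≠ 0 := sub_ne_zero_of_ne (hnp j m)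
          field_simp
      _ = 0 := by rw [← Finset.sum_mul, hrow', zero_mul]
  -- hence P = 0
  have hPz : P = 0 := by
    by_cases h0 : P = 0
    · exact h0
    · have hlt : P.natDegree < N := by
        rcases lt_or_eq_of_le hdegP with h | h
        · exact h
        · exfalso
          apply h0
          apply Polynomial.leadingCoeff_eq_zero.mp
          rw [Polynomial.leadingCoeff, h]
          exact hcoeff
      exact absurd (eq_zero_of_natDegree_lt_card_of_eval_eq_zero P hn heval
        (by simpa using hlt)) h0
  -- evaluate P at p m to get v m = 0
  apply hv
  funext m
  have := congrArg (Polynomial.eval (p m)) hPz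
  rw [hP, eval_finset_sum, eval_zero] at this
  have hterm : ∀ m' ∈ (univ : Finset (Fin (N+1))), m' ≠ m →
      (C (v m') * ∏ l ∈ univ.erase m', (X - C (p l))).eval (p m) = 0 := by
    intro m' _ hne
    rw [eval_mul, eval_prod]
    have : ((X : ℂ[X]) - C (p m)).eval (p m) = 0 := by simp
    rw [Finset.prod_eq_zero (Finset.mem_erase.mpr ⟨hne.symm, Finset.mem_univ m⟩) (by simp)]
    ring
  rw [Finset.sum_eq_single m (fun m' h h' => hterm m' h h') (by simp)] at this
  rw [eval_mul, eval_C, eval_prod] at this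
  have hprod : ∏ l ∈ univ.erase m, (p m - p l) ≠ 0 := by
    apply Finset.prod_ne_zero_iff.mpr
    intro l hl
    exact sub_ne_zero_of_ne (fun h => (Finset.mem_erase.mp hl).1 (hp h.symm))
  simp only [eval_sub, eval_X, eval_C] at this
  have := mul_eq_zero.mp this
  simp only [Pi.zero_apply]
  tauto
end

section
/- Let k, ρ ∈ ℂ with k² ≠ ρ². Then for all x ∈ [-1,1], ∫_{-1}^{1} e^{-k|x-x'|} cosh(ρ x') dx' = [2k·cosh(ρx) - 2 e^{-k} cosh(kx)·(k·cosh(ρ) + ρ·sinh(ρ))]/(k² - ρ²). -/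
lemma coshEq (z : ℂ) : Complex.cosh z = (Complex.exp z + Complex.exp (-z)) / 2 := by
  rw [eq_div_iff (two_ne_zero' ℂ), mul_comm, Complex.two_cosh]

lemma Iexp (c ρ : ℂ) (h : c ^ 2 - ρ ^ 2 ≠ 0) (a b : ℝ) :
    (∫ t in a..b, Complex.exp (c * t) * Complex.cosh (ρ * t)) =
      Complex.exp (c * b) * (c * Complex.cosh (ρ * b) - ρ * Complex.sinh (ρ * b)) / (c ^ 2 - ρ ^ 2)
      - Complex.exp (c * a) * (c * Complex.cosh (ρ * a) - ρ * Complex.sinh (ρ * a))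
          / (c ^ 2 - ρ ^ 2) := by
  have hD : ∀ t : ℝ, HasDerivAt
      (fun t : ℝ => Complex.exp (c * t) * (c * Complex.cosh (ρ * t) - ρ * Complex.sinh (ρ * t))
        / (c ^ 2 - ρ ^ 2))
      (Complex.exp (c * t) * Complex.cosh (ρ * t)) t := by
    intro t
    have hcz : HasDerivAt (fun z : ℂ => c * z) c (t : ℂ) := by
      simpa using (hasDerivAt_id (t : ℂ)).const_mul c
    have hρz : HasDerivAt (fun z : ℂ => ρ * z) ρ (t : ℂ) := by
      simpa using (hasDerivAt_id (t : ℂ)).const_mul ρ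
    have h2 := ((hρz.ccosh).const_mul c).sub ((hρz.csinh).const_mul ρ)
    have h1 := ((hcz.cexp.mul h2).div_const (c ^ 2 - ρ ^ 2)).comp_ofReal
    convert h1 using 1
    · rfl
    simp only [Pi.sub_apply]
    field_simp
    ring
  have hInt : IntervalIntegrable (fun t : ℝ => Complex.exp (c * t) * Complex.cosh (ρ * t))
      MeasureTheory.volume a b := by
    apply Continuous.intervalIntegrable
    exact (Complex.continuous_exp.comp (continuous_const.mul Complex.continuous_ofReal)).mul
      (Complex.continuous_cosh.comp (continuous_const.mul Complex.continuous_ofReal))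
  rw [intervalIntegral.integral_eq_sub_of_hasDerivAt (fun t _ => hD t) hInt]

/-- ∫_{-1}^{1} e^{-k|x-x'|} cosh(ρx') dx'
    = (2k cosh(ρx) - 2 e^{-k} cosh(kx)(k cosh ρ + ρ sinh ρ))/(k² - ρ²). -/
theorem stmt10 (k ρ : ℂ) (hkρ : k ^ 2 ≠ ρ ^ 2) (x : ℝ) (hx : x ∈ Set.Icc (-1:ℝ) 1) :
    (∫ x' in (-1:ℝ)..1,
        Complex.exp (-k * Complex.ofReal |x - x'|) * Complex.cosh (ρ * (x' : ℂ))) =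
      (2 * k * Complex.cosh (ρ * (x : ℂ))
        - 2 * Complex.exp (-k) * Complex.cosh (k * (x : ℂ))
            * (k * Complex.cosh ρ + ρ * Complex.sinh ρ)) / (k ^ 2 - ρ ^ 2) := by
  obtain ⟨hx1, hx2⟩ := hx
  have hsub : k ^ 2 - ρ ^ 2 ≠ 0 := sub_ne_zero.mpr hkρ
  have hsub' : (-k) ^ 2 - ρ ^ 2 ≠ 0 := by rwa [neg_sq]
  have hcont : Continuous fun t : ℝ =>
      Complex.exp (-k * Complex.ofReal |x - t|) * Complex.cosh (ρ * (t : ℂ)) := by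
    apply Continuous.mul
    · exact Complex.continuous_exp.comp (continuous_const.mul
        (Complex.continuous_ofReal.comp ((continuous_const.sub continuous_id).abs)))
    · exact Complex.continuous_cosh.comp (continuous_const.mul Complex.continuous_ofReal)
  rw [← intervalIntegral.integral_add_adjacent_intervals
    (hcont.intervalIntegrable (-1) x) (hcont.intervalIntegrable x 1)]
  have e1 : (∫ t in (-1:ℝ)..x,
      Complex.exp (-k * Complex.ofReal |x - t|) * Complex.cosh (ρ * (t : ℂ))) =
      Complex.exp (-(k * x)) * ∫ t in (-1:ℝ)..x, Complex.exp (k * t) * Complex.cosh (ρ * t) := by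
    rw [← intervalIntegral.integral_const_mul]
    apply intervalIntegral.integral_congr
    intro t ht
    rw [Set.uIcc_of_le (by linarith : (-1:ℝ) ≤ x)] at ht
    dsimp only
    rw [_root_.abs_of_nonneg (by linarith [ht.2] : (0:ℝ) ≤ x - t), ← mul_assoc, ← Complex.exp_add]
    congr 2
    push_cast
    ring
  have e2 : (∫ t in x..(1:ℝ),
      Complex.exp (-k * Complex.ofReal |x - t|) * Complex.cosh (ρ * (t : ℂ))) =
      Complex.exp (k * x) * ∫ t in x..(1:ℝ), Complex.exp (-k * t) * Complex.cosh (ρ * t) := by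
    rw [← intervalIntegral.integral_const_mul]
    apply intervalIntegral.integral_congr
    intro t ht
    rw [Set.uIcc_of_le (by linarith : x ≤ (1:ℝ))] at ht
    dsimp only
    rw [abs_of_nonpos (by linarith [ht.1] : x - t ≤ 0), ← mul_assoc, ← Complex.exp_add]
    congr 2
    push_cast
    ring
  rw [e1, e2, Iexp k ρ hsub, Iexp (-k) ρ hsub']
  push_cast
  simp only [mul_one, mul_neg_one, neg_mul, neg_sq, Complex.cosh_neg, Complex.sinh_neg]
  rw [coshEq (k * (x : ℂ))]
  have hPP : Complex.exp (k * (x : ℂ)) * Complex.exp (-(k * (x : ℂ))) = 1 := by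
    rw [← Complex.exp_add, add_neg_cancel, Complex.exp_zero]
  linear_combination (2 * k * Complex.cosh (ρ * (x : ℂ)) / (k ^ 2 - ρ ^ 2)) * hPP
end

section
/- Let k, ρ ∈ ℂ with k² ≠ ρ². Then for all x ∈ [-1,1], ∫_{-1}^{1} e^{-k|x-x'|} sinh(ρ x') dx' = [2k·sinh(ρx) - 2 e^{-k} sinh(kx)·(ρ·cosh(ρ) + k·sinh(ρ))]/(k² - ρ²). -/
open Complex intervalIntegral in
private lemma int_exp_lin (c d : ℂ) (hc : c ≠ 0) (a b : ℝ) :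
    (∫ t in a..b, Complex.exp (c * t + d))
      = (Complex.exp (c * b + d) - Complex.exp (c * a + d)) / c := by
  simp only [Complex.exp_add]
  rw [intervalIntegral.integral_mul_const, integral_exp_mul_complex hc]
  ring

set_option maxHeartbeats 1000000 in
/-- ∫_{-1}^{1} e^{-k|x-x'|} sinh(ρx') dx'
    = (2k sinh(ρx) - 2 e^{-k} sinh(kx)(ρ cosh ρ + k sinh ρ))/(k² - ρ²). -/
theorem stmt11 (k ρ : ℂ) (hkρ : k ^ 2 ≠ ρ ^ 2) (x : ℝ) (hx : x ∈ Set.Icc (-1:ℝ) 1) :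
    (∫ x' in (-1:ℝ)..1,
        Complex.exp (-k * Complex.ofReal |x - x'|) * Complex.sinh (ρ * (x' : ℂ))) =
      (2 * k * Complex.sinh (ρ * (x : ℂ))
        - 2 * Complex.exp (-k) * Complex.sinh (k * (x : ℂ))
            * (ρ * Complex.cosh ρ + k * Complex.sinh ρ)) / (k ^ 2 - ρ ^ 2) := by
  obtain ⟨hx1, hx2⟩ := hx
  have hkp : k + ρ ≠ 0 := by
    intro h; apply hkρ; have : k = -ρ := by linear_combination h
    rw [this]; ring
  have hkm : k - ρ ≠ 0 := by
    intro h; apply hkρ; have : k = ρ := by linear_combination h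
    rw [this]
  have hsq : k ^ 2 - ρ ^ 2 ≠ 0 := sub_ne_zero.mpr hkρ
  set X : ℂ := (x : ℂ) with hXdef
  have hcont : Continuous fun x' : ℝ =>
      Complex.exp (-k * Complex.ofReal |x - x'|) * Complex.sinh (ρ * (x' : ℂ)) := by
    fun_prop
  have hI1 : IntervalIntegrable (fun x' : ℝ =>
      Complex.exp (-k * Complex.ofReal |x - x'|) * Complex.sinh (ρ * (x' : ℂ)))
      MeasureTheory.volume (-1) x := hcont.intervalIntegrable _ _
  have hI2 : IntervalIntegrable (fun x' : ℝ =>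
      Complex.exp (-k * Complex.ofReal |x - x'|) * Complex.sinh (ρ * (x' : ℂ)))
      MeasureTheory.volume x 1 := hcont.intervalIntegrable _ _
  rw [← intervalIntegral.integral_add_adjacent_intervals hI1 hI2]
  have e1 : (∫ x' in (-1:ℝ)..x,
      Complex.exp (-k * Complex.ofReal |x - x'|) * Complex.sinh (ρ * (x' : ℂ)))
      = ∫ x' in (-1:ℝ)..x,
        ((1/2) * Complex.exp ((k + ρ) * x' + (-(k * X)))
          - (1/2) * Complex.exp ((k - ρ) * x' + (-(k * X)))) := by
    apply intervalIntegral.integral_congr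
    intro t ht
    rw [Set.uIcc_of_le (by linarith)] at ht
    obtain ⟨ht1, ht2⟩ := ht
    have habs : |x - t| = x - t := abs_of_nonneg (by linarith)
    beta_reduce
    rw [habs, Complex.sinh]
    push_cast
    rw [show -k * (X - t) = (-(k * X)) + k * t by ring]
    rw [Complex.exp_add]
    rw [show (k + ρ) * (t:ℂ) + -(k * X) = (ρ * t) + (k * t + -(k * X)) by ring,
        show (k - ρ) * (t:ℂ) + -(k * X) = (-(ρ * t)) + (k * t + -(k * X)) by ring]
    simp only [Complex.exp_add]
    ring
  have e2 : (∫ x' in x..(1:ℝ),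
      Complex.exp (-k * Complex.ofReal |x - x'|) * Complex.sinh (ρ * (x' : ℂ)))
      = ∫ x' in x..(1:ℝ),
        ((1/2) * Complex.exp ((ρ - k) * x' + (k * X))
          - (1/2) * Complex.exp (-(k + ρ) * x' + (k * X))) := by
    apply intervalIntegral.integral_congr
    intro t ht
    rw [Set.uIcc_of_le (by linarith)] at ht
    obtain ⟨ht1, ht2⟩ := ht
    have habs : |x - t| = t - x := by
      rw [abs_of_nonpos (by linarith)]; ring
    beta_reduce
    rw [habs, Complex.sinh]
    push_cast
    rw [show -k * ((t:ℂ) - X) = (k * X) + (-(k * t)) by ring]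
    rw [Complex.exp_add]
    rw [show (ρ - k) * (t:ℂ) + k * X = (ρ * t) + (-(k * t) + k * X) by ring,
        show -(k + ρ) * (t:ℂ) + k * X = (-(ρ * t)) + (-(k * t) + k * X) by ring]
    simp only [Complex.exp_add]
    ring
  rw [e1, e2]
  have hρk : ρ - k ≠ 0 := fun h => hkm (by linear_combination -h)
  have hnkp : -(k + ρ) ≠ 0 := neg_ne_zero.mpr hkp
  rw [intervalIntegral.integral_sub (Continuous.intervalIntegrable (by fun_prop) _ _) (Continuous.intervalIntegrable (by fun_prop) _ _),
      intervalIntegral.integral_sub (Continuous.intervalIntegrable (by fun_prop) _ _) (Continuous.intervalIntegrable (by fun_prop) _ _),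
      intervalIntegral.integral_const_mul, intervalIntegral.integral_const_mul,
      intervalIntegral.integral_const_mul, intervalIntegral.integral_const_mul,
      int_exp_lin _ _ hkp, int_exp_lin _ _ hkm, int_exp_lin _ _ hρk, int_exp_lin _ _ hnkp]
  -- Now rewrite all exponentials into products of atoms
  rw [show (k + ρ) * X + -(k * X) = ρ * X by ring,
      show (k + ρ) * (-1:ℝ) + -(k * X) = (-k) + ((-ρ) + (-(k * X))) by push_cast; ring,
      show (k - ρ) * X + -(k * X) = -(ρ * X) by ring,
      show (k - ρ) * (-1:ℝ) + -(k * X) = (-k) + (ρ + (-(k * X))) by push_cast; ring,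
      show (ρ - k) * (1:ℝ) + k * X = (-k) + (ρ + k * X) by push_cast; ring,
      show (ρ - k) * X + k * X = ρ * X by ring,
      show -(k + ρ) * (1:ℝ) + k * X = (-k) + ((-ρ) + k * X) by push_cast; ring,
      show -(k + ρ) * X + k * X = -(ρ * X) by ring]
  simp only [Complex.sinh, Complex.cosh, Complex.exp_add, div_neg]
  field_simp
  ring
end

section
/- Let A₀ be the generator of the shift semigroup T₀ on X = C([-h,0]; Y) associated with a C₀-semigroup S on Y with generator B, i.e. D(A₀) = { φ ∈ C¹([-h,0];Y) : φ(0) ∈ D(B), φ'(0) = Bφ(0) } and A₀φ = φ'. Then λ ∈ ℂ is an eigenvalue of A₀ if and only if λ is an eigenvalue of B; moreover φ is an eigenvector of A₀ for λ if and only if φ(θ) = e^{λθ} q for some nonzero q ∈ D(B) with Bq = λq. -/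
open Set

lemma cexp_real_hasDerivAt (lam : ℂ) (θ : ℝ) :
    HasDerivAt (fun t : ℝ => Complex.exp (lam * (t : ℂ)))
      (lam * Complex.exp (lam * (θ : ℂ))) θ := by
  have h1 : HasDerivAt (fun t : ℝ => lam * (t : ℂ)) lam θ := by
    simpa using (Complex.ofRealCLM.hasDerivAt (x := θ)).const_mul lam
  simpa [mul_comm] using h1.cexp

lemma expSmul_hasDerivAt {Y : Type*} [NormedAddCommGroup Y] [NormedSpace ℂ Y]
    (lam : ℂ) (q : Y) (θ : ℝ) :
    HasDerivAt (fun t : ℝ => Complex.exp (lam * (t : ℂ)) • q)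
      ((lam * Complex.exp (lam * (θ : ℂ))) • q) θ :=
  (cexp_real_hasDerivAt lam θ).smul_const q

lemma ode_unique {Y : Type*} [NormedAddCommGroup Y] [NormedSpace ℂ Y]
    {h : ℝ} (hh : 0 < h) {lam : ℂ} {φ : ℝ → Y}
    (hφ : ContDiffOn ℝ 1 φ (Icc (-h) 0))
    (hode : ∀ θ ∈ Icc (-h) 0, derivWithin φ (Icc (-h) 0) θ = lam • φ θ) :
    ∀ θ ∈ Icc (-h) 0, φ θ = Complex.exp (lam * (θ : ℂ)) • φ 0 := by
  have hud : UniqueDiffOn ℝ (Icc (-h) (0:ℝ)) := uniqueDiffOn_Icc (by linarith)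
  have hdiff : DifferentiableOn ℝ φ (Icc (-h) 0) := hφ.differentiableOn one_ne_zero
  set g : ℝ → Y := fun t => Complex.exp (-lam * (t : ℂ)) • φ t with hg
  have hgd : ∀ θ ∈ Icc (-h) (0:ℝ), HasDerivWithinAt g 0 (Icc (-h) 0) θ := by
    intro θ hθ
    have hφd : HasDerivWithinAt φ (derivWithin φ (Icc (-h) 0) θ) (Icc (-h) 0) θ :=
      (hdiff θ hθ).hasDerivWithinAt
    have hc : HasDerivWithinAt (fun t : ℝ => Complex.exp (-lam * (t : ℂ)))
        (-lam * Complex.exp (-lam * (θ : ℂ))) (Icc (-h) 0) θ :=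
      (cexp_real_hasDerivAt (-lam) θ).hasDerivWithinAt
    have := hc.smul hφd
    rw [hode θ hθ] at this
    convert this using 1
    · rfl
    rw [smul_smul, ← add_smul,
      show Complex.exp (-lam * (θ:ℂ)) * lam + -lam * Complex.exp (-lam * (θ:ℂ)) = 0 by ring,
      zero_smul]
  have hgdiff : DifferentiableOn ℝ g (Icc (-h) 0) := fun x hx =>
    (hgd x hx).differentiableWithinAt
  have hconst : ∀ x ∈ Icc (-h) (0:ℝ), g x = g (-h) :=
    constant_of_derivWithin_zero hgdiff (fun x hx =>
      ((hgd x ⟨hx.1, hx.2.le⟩).derivWithin (hud x ⟨hx.1, hx.2.le⟩)))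
  intro θ hθ
  have h0 : (0:ℝ) ∈ Icc (-h) (0:ℝ) := ⟨by linarith, le_refl 0⟩
  have key : g θ = g 0 := (hconst θ hθ).trans (hconst 0 h0).symm
  have : Complex.exp (-lam * (θ:ℂ)) • φ θ = φ 0 := by
    simpa [hg] using key
  calc φ θ = (Complex.exp (lam * (θ:ℂ)) * Complex.exp (-lam * (θ:ℂ))) • φ θ := by
        rw [← Complex.exp_add, show lam * (θ:ℂ) + -lam * (θ:ℂ) = 0 by ring,
          Complex.exp_zero, one_smul]
    _ = Complex.exp (lam * (θ:ℂ)) • φ 0 := by rw [← smul_smul, this]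

/-- Eigenvalue correspondence between the generator A₀ of the shift semigroup on
X = C([-h,0];Y) (with domain {φ ∈ C¹ : φ(0) ∈ D(B), φ'(0) = Bφ(0)} and A₀φ = φ')
and the operator B: λ is an eigenvalue of A₀ iff it is an eigenvalue of B, and the
eigenvectors of A₀ are exactly θ ↦ e^{λθ} q with q a (nonzero) eigenvector of B. -/
theorem stmt13 {Y : Type*} [NormedAddCommGroup Y] [NormedSpace ℂ Y] [CompleteSpace Y]
    (h : ℝ) (hh : 0 < h) (DB : Set Y) (B : Y → Y) (lam : ℂ) :
    ((∃ φ : ℝ → Y, ContDiffOn ℝ 1 φ (Set.Icc (-h) 0) ∧ φ 0 ∈ DB ∧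
        derivWithin φ (Set.Icc (-h) 0) 0 = B (φ 0) ∧
        (∃ θ ∈ Set.Icc (-h) 0, φ θ ≠ 0) ∧
        (∀ θ ∈ Set.Icc (-h) 0, derivWithin φ (Set.Icc (-h) 0) θ = lam • φ θ)) ↔
      (∃ q, q ∈ DB ∧ q ≠ 0 ∧ B q = lam • q)) ∧
    (∀ φ : ℝ → Y, ContDiffOn ℝ 1 φ (Set.Icc (-h) 0) → φ 0 ∈ DB →
      derivWithin φ (Set.Icc (-h) 0) 0 = B (φ 0) →
      (((∃ θ ∈ Set.Icc (-h) 0, φ θ ≠ 0) ∧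
          ∀ θ ∈ Set.Icc (-h) 0, derivWithin φ (Set.Icc (-h) 0) θ = lam • φ θ) ↔
        ∃ q, q ∈ DB ∧ q ≠ 0 ∧ B q = lam • q ∧
          ∀ θ ∈ Set.Icc (-h) 0, φ θ = Complex.exp (lam * (θ : ℂ)) • q)) := by
  have hud : UniqueDiffOn ℝ (Icc (-h) (0:ℝ)) := uniqueDiffOn_Icc (by linarith)
  have h0 : (0:ℝ) ∈ Icc (-h) (0:ℝ) := ⟨by linarith, le_refl 0⟩
  -- derivWithin of the exponential solution
  have hdw : ∀ (q : Y), ∀ θ ∈ Icc (-h) (0:ℝ),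
      derivWithin (fun t : ℝ => Complex.exp (lam * (t : ℂ)) • q) (Icc (-h) 0) θ
        = (lam * Complex.exp (lam * (θ:ℂ))) • q := fun q θ hθ =>
    ((expSmul_hasDerivAt lam q θ).hasDerivWithinAt).derivWithin (hud θ hθ)
  -- forward: ODE solution gives eigenvector of B
  have fwd : ∀ φ : ℝ → Y, ContDiffOn ℝ 1 φ (Icc (-h) 0) →
      derivWithin φ (Icc (-h) 0) 0 = B (φ 0) →
      (∃ θ ∈ Icc (-h) (0:ℝ), φ θ ≠ 0) →
      (∀ θ ∈ Icc (-h) (0:ℝ), derivWithin φ (Icc (-h) 0) θ = lam • φ θ) →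
      (φ 0 ≠ 0 ∧ B (φ 0) = lam • φ 0 ∧
        ∀ θ ∈ Icc (-h) (0:ℝ), φ θ = Complex.exp (lam * (θ:ℂ)) • φ 0) := by
    intro φ hφ hB hne hode
    have hrep := ode_unique hh hφ hode
    refine ⟨?_, ?_, hrep⟩
    · rintro h0eq
      obtain ⟨θ, hθ, hθne⟩ := hne
      exact hθne (by rw [hrep θ hθ, h0eq, smul_zero])
    · rw [← hB, hode 0 h0]
  constructor
  · constructor
    · rintro ⟨φ, hφ, hmem, hB, hne, hode⟩
      obtain ⟨hq0, hBq, _⟩ := fwd φ hφ hB hne hode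
      exact ⟨φ 0, hmem, hq0, hBq⟩
    · rintro ⟨q, hqDB, hq0, hBq⟩
      refine ⟨fun t : ℝ => Complex.exp (lam * (t : ℂ)) • q, ?_, ?_, ?_, ?_, ?_⟩
      · have hc : ContDiff ℝ 1 (fun t : ℝ => Complex.exp (lam * (t : ℂ))) := by
          have h1 : ContDiff ℝ 1 (fun t : ℝ => lam * (t : ℂ)) :=
            contDiff_const.mul Complex.ofRealCLM.contDiff
          exact (Complex.contDiff_exp (𝕜 := ℝ) (n := 1)).comp h1
        have hs2 : ContDiff ℝ 1 (fun c : ℂ => c • q) :=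
          (((1 : ℂ →L[ℂ] ℂ).smulRight q).restrictScalars ℝ).contDiff
        exact (hs2.comp hc).contDiffOn
      · simpa using hqDB
      · rw [hdw q 0 h0]; simp [hBq]
      · exact ⟨0, h0, by simpa using hq0⟩
      · intro θ hθ
        rw [hdw q θ hθ, smul_smul]
  · intro φ hφ hmem hB
    constructor
    · rintro ⟨hne, hode⟩
      obtain ⟨hq0, hBq, hrep⟩ := fwd φ hφ hB hne hode
      exact ⟨φ 0, hmem, hq0, hBq, hrep⟩
    · rintro ⟨q, hqDB, hq0, hBq, hrep⟩
      have hφ0 : φ 0 = q := by simpa using hrep 0 h0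
      constructor
      · exact ⟨0, h0, by rw [hφ0]; exact hq0⟩
      · intro θ hθ
        have : derivWithin φ (Icc (-h) 0) θ
            = derivWithin (fun t : ℝ => Complex.exp (lam * (t : ℂ)) • q) (Icc (-h) 0) θ :=
          derivWithin_congr (fun x hx => hrep x hx) (hrep θ hθ)
        rw [this, hdw q θ hθ, hrep θ hθ, smul_smul]
end

section
/- With A₀ as above and z in the resolvent set of B, the operator R defined by (Rφ)(θ) = e^{zθ}·R(z,B)φ(0) + ∫_θ^0 e^{z(θ-s)} φ(s) ds (θ ∈ [-h,0]) maps X into D(A₀) and satisfies (z - A₀)(Rφ) = φ for all φ ∈ X; hence z belongs to the resolvent set of A₀ and R = R(z, A₀). -/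
open intervalIntegral MeasureTheory Topology Filter

/-- If z is in the resolvent set of B (with resolvent Rz), then the operator
(Rφ)(θ) = e^{zθ} Rz(φ(0)) + ∫_θ^0 e^{z(θ-s)} φ(s) ds maps continuous φ into the
domain of A₀ and satisfies (z - A₀)(Rφ) = φ; hence it is the resolvent of A₀. -/
theorem stmt14 {Y : Type*} [NormedAddCommGroup Y] [NormedSpace ℂ Y] [CompleteSpace Y]
    (h : ℝ) (hh : 0 < h) (DB : Set Y) (B : Y → Y) (z : ℂ) (Rz : Y → Y)
    (hRz1 : ∀ y, Rz y ∈ DB ∧ z • Rz y - B (Rz y) = y)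
    (hRz2 : ∀ q ∈ DB, Rz (z • q - B q) = q)
    (φ : ℝ → Y) (hφ : ContinuousOn φ (Set.Icc (-h) 0)) :
    let Rφ : ℝ → Y := fun θ => Complex.exp (z * (θ : ℂ)) • Rz (φ 0)
      + ∫ s in θ..(0:ℝ), Complex.exp (z * ((θ : ℂ) - (s : ℂ))) • φ s
    ContDiffOn ℝ 1 Rφ (Set.Icc (-h) 0) ∧ Rφ 0 ∈ DB ∧
      derivWithin Rφ (Set.Icc (-h) 0) 0 = B (Rφ 0) ∧
      ∀ θ ∈ Set.Icc (-h) 0, z • Rφ θ - derivWithin Rφ (Set.Icc (-h) 0) θ = φ θ := by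
  intro Rφ
  have hh0 : (-h : ℝ) < 0 := by linarith
  set s : Set ℝ := Set.Icc (-h) 0 with hs
  have hus : UniqueDiffOn ℝ s := uniqueDiffOn_Icc hh0
  set f : ℝ → Y := fun u => Complex.exp (-(z * (u : ℂ))) • φ u with hfdef
  have hfc : ContinuousOn f s := by
    apply ContinuousOn.smul _ hφ
    exact (Complex.continuous_exp.comp
      (continuous_const.mul Complex.continuous_ofReal).neg).continuousOn
  set g : ℝ → Y := fun θ => ∫ u in θ..(0:ℝ), f u with hgdef
  have hg' : g = fun θ => -∫ u in (0:ℝ)..θ, f u := by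
    funext θ; rw [hgdef]; exact intervalIntegral.integral_symm 0 θ
  have hRφ : Rφ = fun θ : ℝ => Complex.exp (z * (θ : ℂ)) • (Rz (φ 0) + g θ) := by
    funext θ
    have hpt : ∀ u : ℝ, Complex.exp (z * ((θ : ℂ) - (u : ℂ))) • φ u
        = Complex.exp (z * (θ : ℂ)) • f u := by
      intro u
      rw [hfdef, smul_smul, ← Complex.exp_add]
      ring_nf
    show Complex.exp (z * (θ : ℂ)) • Rz (φ 0)
        + ∫ u in θ..(0:ℝ), Complex.exp (z * ((θ : ℂ) - (u : ℂ))) • φ u = _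
    rw [intervalIntegral.integral_congr (fun u _ => hpt u), intervalIntegral.integral_smul,
      smul_add]
  -- key derivative fact
  have key : ∀ θ ∈ s, HasDerivWithinAt Rφ (z • Rφ θ - φ θ) s θ := by
    intro θ hθ
    haveI : Fact (θ ∈ Set.Icc (-h) 0) := ⟨hθ⟩
    have hsub : Set.uIcc 0 θ ⊆ s := Set.uIcc_subset_Icc ⟨by linarith, le_rfl⟩ hθ
    have hint : IntervalIntegrable f volume 0 θ :=
      (hfc.mono hsub).intervalIntegrable
    have hmeas : StronglyMeasurableAtFilter f (𝓝[s] θ) :=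
      ⟨s, self_mem_nhdsWithin, hfc.aestronglyMeasurable measurableSet_Icc⟩
    have hFTC : HasDerivWithinAt (fun u => ∫ x in (0:ℝ)..u, f x) (f θ) s θ :=
      intervalIntegral.integral_hasDerivWithinAt_right hint hmeas (hfc θ hθ)
    have hgd : HasDerivWithinAt g (-(f θ)) s θ := by
      rw [hg']; exact hFTC.neg
    have hFd : HasDerivWithinAt (fun u => Rz (φ 0) + g u) (-(f θ)) s θ := hgd.const_add _
    have hcd : HasDerivWithinAt (fun u : ℝ => Complex.exp (z * (u : ℂ)))
        (z * Complex.exp (z * (θ : ℂ))) s θ := by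
      have h1 : HasDerivAt (fun w : ℂ => Complex.exp (z * w))
          (Complex.exp (z * (θ : ℂ)) * (z * 1)) (θ : ℂ) :=
        ((hasDerivAt_id ((θ : ℝ) : ℂ)).const_mul z).cexp
      have h2 := h1.comp_ofReal
      simpa [mul_comm] using h2.hasDerivWithinAt
    have hsm := hcd.smul hFd
    have hval : Complex.exp (z * (θ : ℂ)) • (-(f θ))
        + (z * Complex.exp (z * (θ : ℂ))) • (Rz (φ 0) + g θ) = z • Rφ θ - φ θ := by
      rw [hRφ, hfdef]
      simp only [smul_neg, smul_smul, ← Complex.exp_add, add_neg_cancel, Complex.exp_zero,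
        one_smul]
      rw [mul_smul]
      abel
    rw [hRφ]
    rw [hRφ] at hval
    exact hval ▸ hsm
  have hdW : ∀ θ ∈ s, derivWithin Rφ s θ = z • Rφ θ - φ θ :=
    fun θ hθ => (key θ hθ).derivWithin (hus θ hθ)
  have hdiff : DifferentiableOn ℝ Rφ s := fun θ hθ => (key θ hθ).differentiableWithinAt
  have hRφcont : ContinuousOn Rφ s := hdiff.continuousOn
  have hmem0 : (0 : ℝ) ∈ s := ⟨le_of_lt hh0, le_rfl⟩
  have h0 : Rφ 0 = Rz (φ 0) := by
    show Complex.exp (z * ((0:ℝ) : ℂ)) • Rz (φ 0)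
      + ∫ u in (0:ℝ)..(0:ℝ), Complex.exp (z * (((0:ℝ) : ℂ) - (u : ℂ))) • φ u = _
    simp
  refine ⟨?_, ?_, ?_, ?_⟩
  · have : ContDiffOn ℝ (0 + 1) Rφ s := by
      rw [contDiffOn_succ_iff_derivWithin hus]
      refine ⟨hdiff, by simp, ?_⟩
      rw [contDiffOn_zero]
      exact ((hRφcont.const_smul z).sub hφ).congr hdW
    simpa using this
  · rw [h0]; exact (hRz1 (φ 0)).1
  · rw [hdW 0 hmem0, h0]
    nth_rewrite 2 [← (hRz1 (φ 0)).2]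
    abel
  · intro θ hθ
    rw [hdW θ hθ]; abel
end

section
/- Let z ∈ ρ(A₀) (the resolvent set of the generator A₀ of the shift semigroup on X = C([-h,0];Y)). Then z ∈ ρ(B). (Combined with the converse, σ(A₀) = σ(B).) -/
/-- If z - A₀ is bijective from D(A₀) onto C([-h,0];Y) (surjectivity and injectivity
stated concretely), then z - B is bijective from D(B) onto Y, i.e. z ∈ ρ(B). -/
theorem stmt15 {Y : Type*} [NormedAddCommGroup Y] [NormedSpace ℂ Y] [CompleteSpace Y]
    (h : ℝ) (hh : 0 < h) (DB : Set Y) (B : Y → Y) (z : ℂ)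
    (hsurj : ∀ ψ : ℝ → Y, ContinuousOn ψ (Set.Icc (-h) 0) →
      ∃ φ : ℝ → Y, ContDiffOn ℝ 1 φ (Set.Icc (-h) 0) ∧ φ 0 ∈ DB ∧
        derivWithin φ (Set.Icc (-h) 0) 0 = B (φ 0) ∧
        ∀ θ ∈ Set.Icc (-h) 0, z • φ θ - derivWithin φ (Set.Icc (-h) 0) θ = ψ θ)
    (hinj : ∀ φ : ℝ → Y, ContDiffOn ℝ 1 φ (Set.Icc (-h) 0) → φ 0 ∈ DB →
      derivWithin φ (Set.Icc (-h) 0) 0 = B (φ 0) →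
      (∀ θ ∈ Set.Icc (-h) 0, z • φ θ - derivWithin φ (Set.Icc (-h) 0) θ = 0) →
      ∀ θ ∈ Set.Icc (-h) 0, φ θ = 0) :
    (∀ y : Y, ∃ q ∈ DB, z • q - B q = y) ∧
      (∀ q ∈ DB, z • q - B q = 0 → q = 0) := by
  have h0mem : (0 : ℝ) ∈ Set.Icc (-h) 0 := ⟨by linarith, le_refl 0⟩
  have hud : UniqueDiffOn ℝ (Set.Icc (-h) 0) := uniqueDiffOn_Icc (by linarith)
  constructor
  · intro y
    obtain ⟨φ, _, hφ0, hφ0', hφeq⟩ := hsurj (fun _ => y) continuousOn_const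
    refine ⟨φ 0, hφ0, ?_⟩
    have := hφeq 0 h0mem
    rw [hφ0'] at this
    exact this
  · intro q hq hzq
    set φ : ℝ → Y := fun t => Complex.exp (z * t) • q with hφdef
    have hder : ∀ θ : ℝ, HasDerivAt φ ((Complex.exp (z * θ) * z) • q) θ := by
      intro θ
      have h1 : HasDerivAt (fun t : ℝ => (t : ℂ)) 1 θ := by
        simpa using (hasDerivAt_id θ).ofReal_comp
      have h2 : HasDerivAt (fun t : ℝ => z * (t : ℂ)) z θ := by
        simpa using h1.const_mul z
      exact (h2.cexp).smul_const q
    have hdw : ∀ θ ∈ Set.Icc (-h) 0,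
        derivWithin φ (Set.Icc (-h) 0) θ = (Complex.exp (z * θ) * z) • q := by
      intro θ hθ
      exact ((hder θ).hasDerivWithinAt).derivWithin (hud θ hθ)
    have hφ0val : φ 0 = q := by simp [hφdef]
    have hcd : ContDiffOn ℝ 1 φ (Set.Icc (-h) 0) := by
      have : ContDiff ℝ 1 φ := by
        rw [contDiff_one_iff_deriv]
        refine ⟨fun θ => (hder θ).differentiableAt, ?_⟩
        have hderiv2 : deriv φ = fun θ : ℝ => (Complex.exp (z * (θ : ℂ)) * z) • q :=
          funext fun θ => (hder θ).deriv
        rw [hderiv2]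
        exact ((Complex.continuous_exp.comp (continuous_const.mul Complex.continuous_ofReal)).mul
          continuous_const).smul continuous_const
      exact this.contDiffOn
    have hd0 : derivWithin φ (Set.Icc (-h) 0) 0 = B (φ 0) := by
      rw [hdw 0 h0mem, hφ0val]
      have : z • q - B q = 0 := hzq
      have hBq : B q = z • q := by
        have := sub_eq_zero.mp this
        exact this.symm
      rw [hBq]
      simp
    have heq : ∀ θ ∈ Set.Icc (-h) 0,
        z • φ θ - derivWithin φ (Set.Icc (-h) 0) θ = 0 := by
      intro θ hθ
      rw [hdw θ hθ]
      simp only [hφdef]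
      rw [smul_smul, mul_comm z (Complex.exp (z * θ)), sub_self]
    have := hinj φ hcd (hφ0val ▸ hq) hd0 heq 0 h0mem
    rwa [hφ0val] at this
end
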